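/- For all μ > 1/2 and r > 0, the integral of the generalized Mathieu series over (0,∞) satisfies ∫_0^∞ S_μ(r) dr = √π · Γ(μ+1/2) · ζ(2μ) / Γ(μ+1). -/

import Mathlib

open Real

noncomputable def mathieuS (μ r : ℝ) : ℝ :=
  ∑' n : ℕ, (2 * ((n : ℝ) + 1)) / ((((n : ℝ) + 1) ^ 2 + r ^ 2) ^ (μ + 1))

noncomputable def zetaR (s : ℝ) : ℝ := ∑' n : ℕ, ((n : ℝ) + 1) ^ (-s)

open MeasureTheory Set in
lemma betaReal {u v : ℝ} (hu : 0 < u) (hv : 0 < v) :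
    IntegrableOn (fun x : ℝ => x ^ (u - 1) * (1 - x) ^ (v - 1)) (Set.Ioo 0 1) ∧
    ∫ x in Set.Ioo (0:ℝ) 1, x ^ (u - 1) * (1 - x) ^ (v - 1)
      = Real.Gamma u * Real.Gamma v / Real.Gamma (u + v) := by
  have huc : 0 < Complex.re (u : ℂ) := by simpa using hu
  have hvc : 0 < Complex.re (v : ℂ) := by simpa using hv
  have hconv := Complex.betaIntegral_convergent huc hvc
  have hIoo : IntegrableOn (fun x : ℝ => ((x : ℂ)) ^ ((u : ℂ) - 1) * ((1 : ℂ) - x) ^ ((v : ℂ) - 1))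
      (Set.Ioo 0 1) := by
    have := (intervalIntegrable_iff_integrableOn_Ioo_of_le (by norm_num : (0:ℝ) ≤ 1)).mp hconv
    exact this
  have hagree : ∀ x ∈ Set.Ioo (0:ℝ) 1,
      ((x ^ (u - 1) * (1 - x) ^ (v - 1) : ℝ) : ℂ)
        = ((x : ℂ)) ^ ((u : ℂ) - 1) * ((1 : ℂ) - x) ^ ((v : ℂ) - 1) := by
    intro x hx
    rw [Complex.ofReal_mul, Complex.ofReal_cpow hx.1.le, Complex.ofReal_cpow (by linarith [hx.2])]
    push_cast
    ring_nf
  have hint : IntegrableOn (fun x : ℝ => x ^ (u - 1) * (1 - x) ^ (v - 1)) (Set.Ioo 0 1) := by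
    have hre : IntegrableOn
        (fun x : ℝ => (((x : ℂ)) ^ ((u : ℂ) - 1) * ((1 : ℂ) - x) ^ ((v : ℂ) - 1)).re)
        (Set.Ioo 0 1) := hIoo.re
    refine hre.congr_fun (fun x hx => ?_) measurableSet_Ioo
    dsimp only
    rw [← hagree x hx]
    simp
  refine ⟨hint, ?_⟩
  have hB := Complex.Gamma_mul_Gamma_eq_betaIntegral huc hvc
  have hBval : Complex.betaIntegral u v
      = ((∫ x in Set.Ioo (0:ℝ) 1, x ^ (u - 1) * (1 - x) ^ (v - 1) : ℝ) : ℂ) := by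
    rw [Complex.betaIntegral, intervalIntegral.integral_of_le (by norm_num : (0:ℝ) ≤ 1),
      MeasureTheory.integral_Ioc_eq_integral_Ioo]
    rw [setIntegral_congr_fun measurableSet_Ioo fun x hx => (hagree x hx).symm]
    exact integral_ofReal
  rw [hBval, Complex.Gamma_ofReal, Complex.Gamma_ofReal, ← Complex.ofReal_add,
    Complex.Gamma_ofReal] at hB
  have hB' : Real.Gamma u * Real.Gamma v
      = Real.Gamma (u + v) * ∫ x in Set.Ioo (0:ℝ) 1, x ^ (u - 1) * (1 - x) ^ (v - 1) := by
    exact_mod_cast hB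
  have hG : Real.Gamma (u + v) ≠ 0 := (Real.Gamma_pos_of_pos (by linarith)).ne'
  field_simp [hG] at hB' ⊢
  linarith [hB']

open MeasureTheory Set in
lemma keyI (μ : ℝ) (hμ : 0 < μ + 1/2) :
    IntegrableOn (fun t : ℝ => (1 + t ^ 2) ^ (-(μ + 1))) (Set.Ioi 0) ∧
    ∫ t in Set.Ioi (0:ℝ), (1 + t ^ 2) ^ (-(μ + 1))
      = Real.sqrt π * Real.Gamma (μ + 1/2) / Real.Gamma (μ + 1) / 2 := by
  set u : ℝ := 1/2 with hu_def
  set v : ℝ := μ + 1/2 with hv_def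
  have hu : 0 < u := by norm_num
  have hv : 0 < v := hμ
  set g : ℝ → ℝ := fun x => x ^ (u - 1) * (1 - x) ^ (v - 1) with hg_def
  set f : ℝ → ℝ := fun t => t ^ 2 / (1 + t ^ 2) with hf_def
  set f' : ℝ → ℝ := fun t => 2 * t / (1 + t ^ 2) ^ 2 with hf'_def
  have hderiv : ∀ t ∈ Set.Ioi (0:ℝ), HasDerivWithinAt f (f' t) (Set.Ioi 0) t := by
    intro t _
    have hne : (1 + t ^ 2 : ℝ) ≠ 0 := by positivity
    have h := (hasDerivAt_pow 2 t).div ((hasDerivAt_pow 2 t).const_add 1) hne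
    have h2 : HasDerivAt f (f' t) t := by
      refine h.congr_deriv ?_
      rw [hf'_def]
      push_cast
      rw [div_eq_div_iff (by positivity) (by positivity)]
      ring
    exact h2.hasDerivWithinAt
  have hinj : Set.InjOn f (Set.Ioi 0) := by
    intro a ha b hb h
    have ha' : (0:ℝ) < a := ha
    have hb' : (0:ℝ) < b := hb
    have hna : (1 + a ^ 2 : ℝ) ≠ 0 := by positivity
    have hnb : (1 + b ^ 2 : ℝ) ≠ 0 := by positivity
    have h' : a ^ 2 * (1 + b ^ 2) = b ^ 2 * (1 + a ^ 2) := by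
      simp only [hf_def] at h
      field_simp at h
      linarith [h]
    have hsq : a ^ 2 = b ^ 2 := by nlinarith
    nlinarith [sq_nonneg (a - b), sq_nonneg (a + b)]
  have himg : f '' Set.Ioi 0 = Set.Ioo 0 1 := by
    ext x
    constructor
    · rintro ⟨t, ht, rfl⟩
      have ht' : (0:ℝ) < t := ht
      constructor
      · positivity
      · rw [div_lt_one (by positivity)]; nlinarith
    · rintro ⟨hx0, hx1⟩
      refine ⟨Real.sqrt (x / (1 - x)), ?_, ?_⟩
      · exact Real.sqrt_pos.mpr (div_pos hx0 (by linarith))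
      · have h1 : Real.sqrt (x / (1 - x)) ^ 2 = x / (1 - x) :=
          Real.sq_sqrt (le_of_lt (div_pos hx0 (by linarith)))
        rw [hf_def]
        simp only [h1]
        have : (1:ℝ) - x ≠ 0 := by linarith
        field_simp
        ring
  have hsub := integral_image_eq_integral_abs_deriv_smul measurableSet_Ioi hderiv hinj g
  have hsubInt := integrableOn_image_iff_integrableOn_abs_deriv_smul measurableSet_Ioi hderiv hinj g
  rw [himg] at hsub hsubInt
  have hpt : ∀ t ∈ Set.Ioi (0:ℝ), |f' t| • g (f t) = 2 * (1 + t ^ 2) ^ (-(μ + 1)) := by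
    intro t ht
    have ht' : (0:ℝ) < t := ht
    have hd : (0:ℝ) < 1 + t ^ 2 := by positivity
    have habs : |f' t| = 2 * t / (1 + t ^ 2) ^ 2 := abs_of_pos (by positivity)
    have e2 : (1 : ℝ) - t ^ 2 / (1 + t ^ 2) = (1 + t ^ 2)⁻¹ := by
      field_simp
      ring
    have e1 : (t ^ 2 / (1 + t ^ 2)) ^ (u - 1) = Real.sqrt (1 + t ^ 2) / t := by
      have : u - 1 = -(1/2 : ℝ) := by rw [hu_def]; norm_num
      rw [this, Real.rpow_neg (by positivity), ← Real.sqrt_eq_rpow,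
        Real.sqrt_div (sq_nonneg t), Real.sqrt_sq ht'.le, inv_div]
    have hvne := (Real.rpow_pos_of_pos hd (v - 1)).ne'
    have hmne := (Real.rpow_pos_of_pos hd (μ + 1)).ne'
    rw [smul_eq_mul, habs, hg_def, hf_def]
    simp only []
    rw [e1, e2, Real.inv_rpow hd.le, Real.rpow_neg hd.le, Real.sqrt_eq_rpow,
      show ((1 + t ^ 2 : ℝ) ^ (2 : ℕ)) = (1 + t ^ 2) ^ ((2 : ℕ) : ℝ) from
        (Real.rpow_natCast _ 2).symm]
    have h2ne := (Real.rpow_pos_of_pos hd ((2:ℕ):ℝ)).ne'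
    field_simp
    rw [← Real.rpow_add hd, ← Real.rpow_add hd, hv_def]
    congr 1
    push_cast
    ring
  have hIoiInt : IntegrableOn (fun t : ℝ => 2 * (1 + t ^ 2) ^ (-(μ + 1))) (Set.Ioi 0) := by
    refine ((hsubInt.mp (betaReal hu hv).1).congr_fun hpt measurableSet_Ioi)
  have hIoiVal : ∫ t in Set.Ioi (0:ℝ), 2 * (1 + t ^ 2) ^ (-(μ + 1))
      = Real.Gamma u * Real.Gamma v / Real.Gamma (u + v) := by
    rw [← setIntegral_congr_fun measurableSet_Ioi hpt, ← hsub]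
    exact (betaReal hu hv).2
  constructor
  · have heq : (fun t : ℝ => (1 + t ^ 2) ^ (-(μ + 1)))
        = fun t : ℝ => (1/2 : ℝ) * (2 * (1 + t ^ 2) ^ (-(μ + 1))) := by
      funext t; ring
    rw [heq]
    exact hIoiInt.const_mul _
  · rw [MeasureTheory.integral_const_mul] at hIoiVal
    have huv : u + v = μ + 1 := by rw [hu_def, hv_def]; ring
    rw [huv, hu_def, Real.Gamma_one_half_eq] at hIoiVal
    rw [hv_def] at hIoiVal
    linarith

open MeasureTheory Set in
lemma termIntegral (μ : ℝ) (hμ : 0 < μ + 1/2) (n : ℕ) :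
    IntegrableOn (fun r : ℝ =>
        (2 * ((n : ℝ) + 1)) / ((((n : ℝ) + 1) ^ 2 + r ^ 2) ^ (μ + 1))) (Set.Ioi 0) ∧
    ∫ r in Set.Ioi (0:ℝ), (2 * ((n : ℝ) + 1)) / ((((n : ℝ) + 1) ^ 2 + r ^ 2) ^ (μ + 1))
      = ((n : ℝ) + 1) ^ (-(2 * μ)) * (Real.sqrt π * Real.Gamma (μ + 1/2) / Real.Gamma (μ + 1)) := by
  set a : ℝ := (n : ℝ) + 1 with ha_def
  have ha : (0:ℝ) < a := by positivity
  have ha1 : (1:ℝ) ≤ a := by simp [ha_def]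
  obtain ⟨hI, hIval⟩ := keyI μ hμ
  -- continuity / measurability of the integrand
  have hcont : Continuous (fun r : ℝ => (2 * a) / ((a ^ 2 + r ^ 2) ^ (μ + 1))) := by
    apply continuous_const.div
    · exact (continuous_const.add (continuous_pow 2)).rpow_const
        (fun x => Or.inr (by linarith))
    · intro x
      exact (Real.rpow_pos_of_pos (by positivity) _).ne'
  constructor
  · -- integrability by comparison
    have hbound : IntegrableOn (fun r : ℝ => (2 * a) * (1 + r ^ 2) ^ (-(μ + 1)))
        (Set.Ioi 0) := hI.const_mul _
    refine Integrable.mono hbound hcont.aestronglyMeasurable.restrict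
      (Filter.Eventually.of_forall fun r => ?_)
    have h1 : (0:ℝ) < 1 + r ^ 2 := by positivity
    have h2 : (0:ℝ) < a ^ 2 + r ^ 2 := by positivity
    rw [Real.norm_eq_abs, Real.norm_eq_abs, abs_of_nonneg (by positivity),
      abs_of_nonneg (by positivity)]
    rw [Real.rpow_neg h1.le, div_eq_mul_inv]
    apply mul_le_mul_of_nonneg_left _ (by positivity)
    apply inv_anti₀ (Real.rpow_pos_of_pos h1 _)
    exact Real.rpow_le_rpow h1.le (by nlinarith) (by linarith)
  · -- value via substitution r = a * t
    set c : ℝ := 2 * a * ((a ^ 2 : ℝ) ^ (μ + 1))⁻¹ with hc_def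
    set G : ℝ → ℝ := fun t => c * (1 + t ^ 2) ^ (-(μ + 1)) with hG_def
    have hGeq : ∀ x : ℝ, (2 * a) / ((a ^ 2 + x ^ 2) ^ (μ + 1)) = G (a⁻¹ * x) := by
      intro x
      have hx : a ^ 2 + x ^ 2 = a ^ 2 * (1 + (a⁻¹ * x) ^ 2) := by
        field_simp
      rw [hx, Real.mul_rpow (by positivity) (by positivity), hG_def]
      simp only []
      rw [Real.rpow_neg (by positivity), hc_def, div_eq_mul_inv, mul_inv]
      ring
    have hcomp := MeasureTheory.integral_comp_mul_left_Ioi G 0 (inv_pos.mpr ha)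
    simp only [mul_zero, inv_inv] at hcomp
    calc ∫ r in Set.Ioi (0:ℝ), (2 * a) / ((a ^ 2 + r ^ 2) ^ (μ + 1))
        = ∫ r in Set.Ioi (0:ℝ), G (a⁻¹ * r) := by
          congr 1; funext r; exact hGeq r
      _ = a • ∫ t in Set.Ioi (0:ℝ), G t := hcomp
      _ = a * (c * ∫ t in Set.Ioi (0:ℝ), (1 + t ^ 2) ^ (-(μ + 1))) := by
          rw [smul_eq_mul, hG_def]
          simp only []
          rw [MeasureTheory.integral_const_mul]
      _ = ((n : ℝ) + 1) ^ (-(2 * μ))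
            * (Real.sqrt π * Real.Gamma (μ + 1/2) / Real.Gamma (μ + 1)) := by
          rw [hIval, hc_def, ← ha_def]
          have hmain : a * (2 * a * ((a ^ 2 : ℝ) ^ (μ + 1))⁻¹)
              = 2 * a ^ (-(2 * μ)) := by
            rw [← Real.rpow_natCast a 2, ← Real.rpow_neg (Real.rpow_nonneg ha.le _),
              ← Real.rpow_mul ha.le]
            push_cast
            rw [show a * (2 * a * a ^ (2 * -(μ + 1))) = 2 * (a ^ (2:ℕ) * a ^ (2 * -(μ + 1)))
                from by ring,
              ← Real.rpow_natCast a 2, ← Real.rpow_add ha]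
            push_cast
            rw [show (2 + 2 * -(μ + 1) : ℝ) = -(2 * μ) from by ring]
          rw [show a * (2 * a * ((a ^ 2 : ℝ) ^ (μ + 1))⁻¹
                * (√π * Real.Gamma (μ + 1/2) / Real.Gamma (μ + 1) / 2))
              = a * (2 * a * ((a ^ 2 : ℝ) ^ (μ + 1))⁻¹)
                * (√π * Real.Gamma (μ + 1/2) / Real.Gamma (μ + 1)) / 2 from by ring,
            hmain]
          ring

open MeasureTheory Set in
theorem stmt11 (μ : ℝ) (hμ : 1 / 2 < μ) :
    ∫ r in Set.Ioi (0 : ℝ), mathieuS μ r =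
      Real.sqrt π * Real.Gamma (μ + 1 / 2) * zetaR (2 * μ) / Real.Gamma (μ + 1) := by
  have hμ' : 0 < μ + 1/2 := by linarith
  set C : ℝ := Real.sqrt π * Real.Gamma (μ + 1/2) / Real.Gamma (μ + 1) with hC_def
  have hC : 0 ≤ C := by
    have := Real.Gamma_pos_of_pos (show (0:ℝ) < μ + 1/2 by linarith)
    have := Real.Gamma_pos_of_pos (show (0:ℝ) < μ + 1 by linarith)
    positivity
  set f : ℕ → ℝ → ℝ := fun n r =>
    (2 * ((n : ℝ) + 1)) / ((((n : ℝ) + 1) ^ 2 + r ^ 2) ^ (μ + 1)) with hf_def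
  have hnonneg : ∀ n r, 0 ≤ f n r := fun n r => by
    apply div_nonneg (by positivity)
    exact (Real.rpow_pos_of_pos (by positivity) _).le
  have hsummable : Summable (fun n : ℕ => ((n : ℝ) + 1) ^ (-(2 * μ))) := by
    have h1 : Summable (fun n : ℕ => ((n : ℝ)) ^ (-(2 * μ))) :=
      Real.summable_nat_rpow.mpr (by linarith)
    have h2 := h1.comp_injective Nat.succ_injective
    refine h2.congr fun n => ?_
    simp [Function.comp, Nat.succ_eq_add_one]
  have hmeas : ∀ n : ℕ, AEStronglyMeasurable (f n) (volume.restrict (Set.Ioi 0)) := by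
    intro n
    have hcont : Continuous (f n) := by
      apply continuous_const.div
      · exact (continuous_const.add (continuous_pow 2)).rpow_const
          (fun x => Or.inr (by linarith))
      · intro x
        exact (Real.rpow_pos_of_pos (by positivity) _).ne'
    exact hcont.aestronglyMeasurable.restrict
  have hlint : ∀ n : ℕ, ∫⁻ r in Set.Ioi (0:ℝ), ‖f n r‖₊
      = ENNReal.ofReal (((n : ℝ) + 1) ^ (-(2 * μ)) * C) := by
    intro n
    rw [hC_def, ← (termIntegral μ hμ' n).2]
    rw [show (∫⁻ r in Set.Ioi (0:ℝ), ‖f n r‖₊) = ∫⁻ r in Set.Ioi (0:ℝ), ENNReal.ofReal (f n r)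
      from lintegral_congr fun r => Real.enorm_eq_ofReal (hnonneg n r)]
    exact (MeasureTheory.ofReal_integral_eq_lintegral_ofReal (termIntegral μ hμ' n).1
      (Filter.Eventually.of_forall fun r => hnonneg n r)).symm
  have hfin : ∑' n : ℕ, ∫⁻ r in Set.Ioi (0:ℝ), ‖f n r‖₊ ≠ ⊤ := by
    simp_rw [hlint]
    rw [← ENNReal.ofReal_tsum_of_nonneg (fun n => mul_nonneg (Real.rpow_nonneg
      (by positivity) _) hC) (hsummable.mul_right C)]
    exact ENNReal.ofReal_ne_top
  have hswap := MeasureTheory.integral_tsum hmeas hfin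
  have hlhs : ∫ r in Set.Ioi (0:ℝ), mathieuS μ r = ∑' n : ℕ, ∫ r in Set.Ioi (0:ℝ), f n r := by
    rw [← hswap]
    rfl
  rw [hlhs]
  have : ∀ n : ℕ, ∫ r in Set.Ioi (0:ℝ), f n r = ((n : ℝ) + 1) ^ (-(2 * μ)) * C :=
    fun n => (termIntegral μ hμ' n).2
  rw [tsum_congr this, tsum_mul_right]
  rw [zetaR, hC_def]
  ring
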